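/- Let q : G → H be a proper, continuous, surjective groupoid homomorphism between locally compact Hausdorff topological groupoids which is topologically a quotient map. Suppose G has a Haar system {μˣ : x ∈ G⁽⁰⁾} such that for all f ∈ C₀(H), all units z of H and all x, y ∈ q⁻¹(z) ∩ G⁽⁰⁾, ∫_G (f ∘ q) dμˣ = ∫_G (f ∘ q) dμʸ. Then H admits a Haar system {νᶻ : z ∈ H⁽⁰⁾} defined by νᶻ = q_*(μˣ) for any x ∈ q⁻¹(z), and q is Haar system preserving with respect to these systems. -/

import Mathlib

open MeasureTheory

/-- A (topological) groupoid structure on a space `G` of arrows: source and target maps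
`src, tgt : G → G` (with values the unit arrows), a partial multiplication `mul`
(meaningful on composable pairs, i.e. when `src g = tgt h`), and inversion, all
continuous (multiplication on the set of composable pairs). -/
structure TopGroupoid (G : Type*) [TopologicalSpace G] where
  src : G → G
  tgt : G → G
  mul : G → G → G
  inv : G → G
  continuous_src : Continuous src
  continuous_tgt : Continuous tgt
  continuous_inv : Continuous inv
  continuous_mul : ContinuousOn (fun p : G × G => mul p.1 p.2) {p : G × G | src p.1 = tgt p.2}
  inv_mul : ∀ g, mul (inv g) g = src g
  mul_inv : ∀ g, mul g (inv g) = tgt g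
  mul_src : ∀ g, mul g (src g) = g
  tgt_mul : ∀ g, mul (tgt g) g = g
  src_inv : ∀ g, src (inv g) = tgt g
  inv_inv : ∀ g, inv (inv g) = g
  src_mul : ∀ g h, src g = tgt h → src (mul g h) = src h
  tgt_mul_eq : ∀ g h, src g = tgt h → tgt (mul g h) = tgt g
  mul_assoc : ∀ g h k, src g = tgt h → src h = tgt k →
    mul (mul g h) k = mul g (mul h k)

namespace TopGroupoid

variable {G : Type*} [TopologicalSpace G]

/-- The unit space of a groupoid: the fixed points of the source map. -/
def units (𝒢 : TopGroupoid G) : Set G := {x : G | 𝒢.src x = x}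

lemma src_src (𝒢 : TopGroupoid G) (g : G) : 𝒢.src (𝒢.src g) = 𝒢.src g := by
  have h := 𝒢.src_mul (𝒢.inv g) g (𝒢.src_inv g)
  rwa [𝒢.inv_mul] at h

lemma src_mem_units (𝒢 : TopGroupoid G) (g : G) : 𝒢.src g ∈ 𝒢.units := 𝒢.src_src g

lemma tgt_inv (𝒢 : TopGroupoid G) (g : G) : 𝒢.tgt (𝒢.inv g) = 𝒢.src g := by
  have h := 𝒢.src_inv (𝒢.inv g)
  rw [𝒢.inv_inv] at h
  exact h.symm

lemma src_tgt (𝒢 : TopGroupoid G) (g : G) : 𝒢.src (𝒢.tgt g) = 𝒢.tgt g := by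
  have h := 𝒢.src_mul g (𝒢.inv g) (𝒢.tgt_inv g).symm
  rwa [𝒢.mul_inv, 𝒢.src_inv] at h

lemma tgt_mem_units (𝒢 : TopGroupoid G) (g : G) : 𝒢.tgt g ∈ 𝒢.units := 𝒢.src_tgt g

end TopGroupoid

/-- A Haar system of measures on a topological groupoid: a family of regular Radon
measures `μˣ` indexed by the units, `μˣ` supported on the fiber `tgt⁻¹(x)`, varying
continuously against compactly supported continuous functions, and left-invariant. -/
structure IsHaarSystem {G : Type*} [TopologicalSpace G] [MeasurableSpace G] [BorelSpace G]
    (𝒢 : TopGroupoid G) (μ : G → Measure G) : Prop where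
  regular : ∀ x ∈ 𝒢.units, (μ x).Regular
  supported : ∀ x ∈ 𝒢.units, μ x {g : G | 𝒢.tgt g ≠ x} = 0
  continuous_integral : ∀ f : G → ℝ, Continuous f → HasCompactSupport f →
    ContinuousOn (fun x : G => ∫ g, f g ∂(μ x)) 𝒢.units
  left_invariant : ∀ g : G, ∀ f : G → ℝ, Continuous f → HasCompactSupport f →
    ∫ h, f h ∂(μ (𝒢.tgt g)) = ∫ h, f (𝒢.mul g h) ∂(μ (𝒢.src g))

/-- A (continuous) groupoid homomorphism between topological groupoids. -/
def IsGroupoidHom {G H : Type*} [TopologicalSpace G] [TopologicalSpace H]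
    (𝒢 : TopGroupoid G) (ℋ : TopGroupoid H) (q : G → H) : Prop :=
  Continuous q ∧
  (∀ g, q (𝒢.src g) = ℋ.src (q g)) ∧
  (∀ g, q (𝒢.tgt g) = ℋ.tgt (q g)) ∧
  (∀ g, q (𝒢.inv g) = ℋ.inv (q g)) ∧
  (∀ g h, 𝒢.src g = 𝒢.tgt h → q (𝒢.mul g h) = ℋ.mul (q g) (q h))

section AuxLemmas
open Set Topology Filter

/-- Pushforward of a regular measure under a continuous closed map with compact
preimages of compacts is regular. -/
lemma regular_map_of_proper {G H : Type*} [TopologicalSpace G] [T2Space G]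
    [MeasurableSpace G] [BorelSpace G]
    [TopologicalSpace H] [T2Space H] [MeasurableSpace H] [BorelSpace H]
    (q : G → H) (hq : Continuous q) (hclosed : IsClosedMap q)
    (hproper : ∀ K : Set H, IsCompact K → IsCompact (q ⁻¹' K))
    (μ : Measure G) (hreg : μ.Regular) : (Measure.map q μ).Regular := by
  have hqm : Measurable q := hq.measurable
  have h1 : IsFiniteMeasureOnCompacts (Measure.map q μ) := by
    constructor
    intro K hK
    rw [Measure.map_apply hqm hK.isClosed.measurableSet]
    exact (hproper K hK).measure_lt_top
  have h2 : (Measure.map q μ).OuterRegular := by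
    constructor
    intro A hA r hr
    rw [Measure.map_apply hqm hA] at hr
    obtain ⟨V, hAV, hVo, hV⟩ := Set.exists_isOpen_lt_of_lt (q ⁻¹' A) r hr
    refine ⟨(q '' Vᶜ)ᶜ, ?_, (hclosed _ hVo.isClosed_compl).isOpen_compl, ?_⟩
    · intro z hz
      simp only [Set.mem_compl_iff, Set.mem_image, not_exists, not_and]
      intro g hg hgz
      exact hg (hAV (by simpa [hgz] using hz))
    · rw [Measure.map_apply hqm (hclosed _ hVo.isClosed_compl).isOpen_compl.measurableSet]
      refine lt_of_le_of_lt (measure_mono ?_) hV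
      intro g hg
      by_contra hgV
      exact hg (Set.mem_image_of_mem q hgV)
  refine { h1, h2 with innerRegular := fun U hU r hr => ?_ }
  · rw [Measure.map_apply hqm hU.measurableSet] at hr
    obtain ⟨K, hKU, hK, hrK⟩ := hreg.innerRegular (hU.preimage hq) r hr
    refine ⟨q '' K, ?_, hK.image hq, ?_⟩
    · rintro z ⟨g, hg, rfl⟩; exact hKU hg
    · rw [Measure.map_apply hqm ((hK.image hq).isClosed.measurableSet)]
      exact lt_of_lt_of_le hrK
        (measure_mono fun g hg => Set.mem_preimage.2 (Set.mem_image_of_mem q hg))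

/-- Two regular measures on a locally compact Hausdorff space with equal integrals of
continuous compactly supported functions are equal. -/
lemma regular_ext_of_integral_eq {X : Type*} [TopologicalSpace X] [T2Space X]
    [LocallyCompactSpace X] [MeasurableSpace X] [BorelSpace X]
    {μ ν : Measure X} (hμ : μ.Regular) (hν : ν.Regular)
    (h : ∀ f : X → ℝ, Continuous f → HasCompactSupport f →
      ∫ x, f x ∂μ = ∫ x, f x ∂ν) : μ = ν := by
  have stepA : ∀ (μ ν : Measure X), μ.Regular → ν.Regular →
      (∀ f : X → ℝ, Continuous f → HasCompactSupport f → ∫ x, f x ∂μ = ∫ x, f x ∂ν) →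
      ∀ K U : Set X, IsCompact K → IsOpen U → K ⊆ U → μ K ≤ ν U := by
    intro μ ν hμ hν h K U hK hU hKU
    rcases eq_top_or_lt_top (ν U) with htop | hfin
    · simp [htop]
    obtain ⟨f, hfK, hfU, hfc, hf01⟩ :=
      exists_continuous_one_zero_of_isCompact hK hU.isClosed_compl
        (disjoint_compl_right_iff_subset.mpr hKU)
    have hfcont : Continuous (f : X → ℝ) := f.continuous
    have hfμint : Integrable f μ := hfcont.integrable_of_hasCompactSupport hfc
    have hfνint : Integrable f ν := hfcont.integrable_of_hasCompactSupport hfc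
    have hμK : (μ K).toReal ≤ ∫ x, f x ∂μ := by
      have h1 : ∫ x in K, f x ∂μ = (μ K).toReal := by
        rw [setIntegral_congr_fun hK.isClosed.measurableSet hfK]
        simp
        rfl
      calc (μ K).toReal = ∫ x in K, f x ∂μ := h1.symm
        _ ≤ ∫ x, f x ∂μ := setIntegral_le_integral hfμint
            (Filter.Eventually.of_forall fun x => (hf01 x).1)
    have hνU : ∫ x, f x ∂ν ≤ (ν U).toReal := by
      have h2 : ∫ x, f x ∂ν = ∫ x in U, f x ∂ν := by
        rw [← integral_add_compl hU.measurableSet hfνint]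
        have h0 : ∫ x in Uᶜ, f x ∂ν = 0 := by
          rw [setIntegral_congr_fun hU.isClosed_compl.measurableSet hfU]
          simp
        rw [h0, add_zero]
      rw [h2]
      calc ∫ x in U, f x ∂ν ≤ ∫ x in U, (1 : ℝ) ∂ν := by
            apply setIntegral_mono_on hfνint.integrableOn
              (integrableOn_const hfin.ne) hU.measurableSet
            intro x _; exact (hf01 x).2
        _ = (ν U).toReal := by simp; rfl
    have hle := le_trans hμK (le_of_eq (h f hfcont hfc) |>.trans hνU)
    exact (ENNReal.toReal_le_toReal hK.measure_lt_top.ne hfin.ne).mp hle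
  have hcompact : ∀ K : Set X, IsCompact K → μ K = ν K := by
    have key : ∀ (μ ν : Measure X), μ.Regular → ν.Regular →
        (∀ f : X → ℝ, Continuous f → HasCompactSupport f → ∫ x, f x ∂μ = ∫ x, f x ∂ν) →
        ∀ K : Set X, IsCompact K → μ K ≤ ν K := by
      intro μ ν hμ hν h K hK
      rw [Set.measure_eq_iInf_isOpen K ν]
      simp only [le_iInf_iff]
      intro U hKU hU
      exact stepA μ ν hμ hν h K U hK hU hKU
    intro K hK
    exact le_antisymm (key μ ν hμ hν h K hK)
      (key ν μ hν hμ (fun f hf hfc => (h f hf hfc).symm) K hK)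
  have hopen : ∀ U : Set X, IsOpen U → μ U = ν U := by
    have key : ∀ (μ ν : Measure X), μ.Regular → ν.Regular →
        (∀ K : Set X, IsCompact K → μ K = ν K) → ∀ U : Set X, IsOpen U → μ U ≤ ν U := by
      intro μ ν hμ hν hc U hU
      refine le_of_forall_lt fun r hr => ?_
      obtain ⟨K, hKU, hK, hrK⟩ := hμ.innerRegular hU r hr
      exact lt_of_lt_of_le hrK ((hc K hK).le.trans (measure_mono hKU))
    intro U hU
    exact le_antisymm (key μ ν hμ hν hcompact U hU)
      (key ν μ hν hμ (fun K hK => (hcompact K hK).symm) U hU)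
  ext s hs
  rw [Set.measure_eq_iInf_isOpen s μ, Set.measure_eq_iInf_isOpen s ν]
  exact iInf_congr fun U => iInf_congr fun hsU => iInf_congr fun hU => hopen U hU

end AuxLemmas

/-- Pushing a Haar system to a quotient: if `q : G → H` is a proper, continuous,
surjective groupoid homomorphism which is a topological quotient map, and the Haar
system `{μˣ}` on `G` satisfies `∫ (f ∘ q) dμˣ = ∫ (f ∘ q) dμʸ` for all `f ∈ C₀(H)`
and all units `x, y` in the same fiber of `q`, then `H` admits a Haar system
`{νᶻ}` with `νᶻ = q_*(μˣ)` for any `x ∈ q⁻¹(z)`, making `q` Haar system preserving. -/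
theorem haar_system_pushes_to_quotient
    {G H : Type*} [TopologicalSpace G] [T2Space G] [LocallyCompactSpace G]
    [MeasurableSpace G] [BorelSpace G]
    [TopologicalSpace H] [T2Space H] [LocallyCompactSpace H]
    [MeasurableSpace H] [BorelSpace H]
    (𝒢 : TopGroupoid G) (ℋ : TopGroupoid H)
    (q : G → H) (hhom : IsGroupoidHom 𝒢 ℋ q)
    (hproper : ∀ K : Set H, IsCompact K → IsCompact (q ⁻¹' K))
    (hsurj : Function.Surjective q)
    (hquot : Topology.IsQuotientMap q)
    (μ : G → Measure G) (hμ : IsHaarSystem 𝒢 μ)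
    (hfibers : ∀ f : H → ℝ, Continuous f → Filter.Tendsto f (Filter.cocompact H) (nhds 0) →
      ∀ z ∈ ℋ.units, ∀ x ∈ 𝒢.units, ∀ y ∈ 𝒢.units, q x = z → q y = z →
        ∫ g, f (q g) ∂(μ x) = ∫ g, f (q g) ∂(μ y)) :
    ∃ ν : H → Measure H, IsHaarSystem ℋ ν ∧
      ∀ x ∈ 𝒢.units, Measure.map q (μ x) = ν (q x) := by
  obtain ⟨hqc, hqsrc, hqtgt, hqinv, hqmul⟩ := hhom
  have hqm : Measurable q := hqc.measurable
  have hclosed : IsClosedMap q :=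
    (isProperMap_iff_isCompact_preimage.mpr ⟨hqc, fun K hK => hproper K hK⟩).isClosedMap
  -- compact support pulls back along q
  have hcs : ∀ f : H → ℝ, HasCompactSupport f → HasCompactSupport (fun g => f (q g)) := by
    intro f hf
    apply IsCompact.of_isClosed_subset (hproper _ hf) (isClosed_tsupport _)
    refine closure_minimal ?_ ((isClosed_tsupport f).preimage hqc)
    intro g hg
    exact Set.mem_preimage.2 (subset_tsupport f hg)
  -- the pushforwards are regular
  have hregmap : ∀ x ∈ 𝒢.units, (Measure.map q (μ x)).Regular := fun x hx =>
    regular_map_of_proper q hqc hclosed hproper (μ x) (hμ.regular x hx)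
  -- well-definedness over fibers
  have welldef : ∀ x ∈ 𝒢.units, ∀ y ∈ 𝒢.units, q x = q y →
      Measure.map q (μ x) = Measure.map q (μ y) := by
    intro x hx y hy hxy
    apply regular_ext_of_integral_eq (hregmap x hx) (hregmap y hy)
    intro f hf hfc
    rw [integral_map hqm.aemeasurable hf.aestronglyMeasurable,
      integral_map hqm.aemeasurable hf.aestronglyMeasurable]
    have hzunit : q x ∈ ℋ.units := by
      have : q (𝒢.src x) = ℋ.src (q x) := hqsrc x
      rw [hx] at this
      exact this.symm
    exact hfibers f hf hfc.is_zero_at_infty (q x) hzunit x hx y hy rfl hxy.symm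
  -- the section and the Haar system candidate
  set σ : H → G := Function.surjInv hsurj with hσdef
  have hσ : ∀ z, q (σ z) = z := fun z => Function.surjInv_eq hsurj z
  set ν : H → Measure H := fun z => Measure.map q (μ (𝒢.src (σ z))) with hνdef
  have hxu : ∀ z, 𝒢.src (σ z) ∈ 𝒢.units := fun z => 𝒢.src_mem_units (σ z)
  have hqν : ∀ z, q (𝒢.src (σ z)) = ℋ.src z := by
    intro z; rw [hqsrc, hσ]
  -- the key compatibility
  have mapeq : ∀ x ∈ 𝒢.units, Measure.map q (μ x) = ν (q x) := by
    intro x hx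
    have hxq : q (𝒢.src (σ (q x))) = q x := by
      rw [hqν]
      have : q (𝒢.src x) = ℋ.src (q x) := hqsrc x
      rw [hx] at this
      exact this.symm
    exact welldef x hx _ (hxu (q x)) hxq.symm
  refine ⟨ν, ⟨?_, ?_, ?_, ?_⟩, mapeq⟩
  · -- regular
    intro z hz
    exact hregmap _ (hxu z)
  · -- supported
    intro z hz
    have hqz : q (𝒢.src (σ z)) = z := by rw [hqν]; exact hz
    have hmeas : MeasurableSet {k : H | ℋ.tgt k ≠ z} :=
      ((isClosed_eq ℋ.continuous_tgt continuous_const).measurableSet).compl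
    rw [hνdef]
    simp only
    rw [Measure.map_apply hqm hmeas]
    apply measure_mono_null _ (hμ.supported _ (hxu z))
    intro g hg
    simp only [Set.mem_setOf_eq, Set.mem_preimage] at hg ⊢
    intro htg
    exact hg (by rw [← hqtgt g, htg, hqz])
  · -- continuous_integral
    intro f hf hfc
    have hfqcont : Continuous (fun g : G => f (q g)) := hf.comp hqc
    have hfqc : HasCompactSupport (fun g : G => f (q g)) := hcs f hfc
    have φcont : Continuous (fun g : G => ∫ h, f (q h) ∂ μ (𝒢.src g)) :=
      (hμ.continuous_integral _ hfqcont hfqc).comp_continuous 𝒢.continuous_src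
        (fun g => 𝒢.src_mem_units g)
    have key : ∀ g : G, ∫ k, f k ∂ ν (q g) = ∫ h, f (q h) ∂ μ (𝒢.src g) := by
      intro g
      rw [hνdef]
      simp only
      rw [integral_map hqm.aemeasurable hf.aestronglyMeasurable]
      exact hfibers f hf hfc.is_zero_at_infty (ℋ.src (q g)) (ℋ.src_mem_units (q g))
        _ (hxu (q g)) _ (𝒢.src_mem_units g) (hqν (q g)) (hqsrc g)
    have : Continuous (fun z => ∫ k, f k ∂ ν z) := by
      rw [hquot.continuous_iff]
      have : (fun z => ∫ k, f k ∂ ν z) ∘ q = fun g : G => ∫ h, f (q h) ∂ μ (𝒢.src g) :=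
        funext fun g => key g
      rw [this]
      exact φcont
    exact this.continuousOn
  · -- left invariance
    intro k f hf hfc
    set g := σ k with hgdef
    have hqg : q g = k := hσ k
    have hfqcont : Continuous (fun g : G => f (q g)) := hf.comp hqc
    have hfqc : HasCompactSupport (fun g : G => f (q g)) := hcs f hfc
    have h1 : ν (ℋ.tgt k) = Measure.map q (μ (𝒢.tgt g)) := by
      rw [hνdef]
      simp only
      apply welldef _ (hxu (ℋ.tgt k)) _ (𝒢.tgt_mem_units g)
      rw [hqν, hqtgt, hqg]
      exact (ℋ.src_tgt k)
    have h2 : ν (ℋ.src k) = Measure.map q (μ (𝒢.src g)) := by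
      rw [hνdef]
      simp only
      apply welldef _ (hxu (ℋ.src k)) _ (𝒢.src_mem_units g)
      rw [hqν, hqsrc, hqg]
      exact (ℋ.src_src k)
    rw [h1, h2]
    -- measurability of the right-hand integrand
    set S : Set H := {k' | ℋ.tgt k' = ℋ.src k} with hSdef
    have hS : IsClosed S := isClosed_eq ℋ.continuous_tgt continuous_const
    have hρS : Measure.map q (μ (𝒢.src g)) Sᶜ = 0 := by
      rw [Measure.map_apply hqm hS.measurableSet.compl]
      apply measure_mono_null _ (hμ.supported _ (𝒢.src_mem_units g))
      intro g' hg'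
      simp only [Set.mem_preimage, Set.mem_compl_iff, hSdef, Set.mem_setOf_eq] at hg'
      simp only [Set.mem_setOf_eq]
      intro htg
      exact hg' (by rw [← hqtgt, htg, hqsrc, hqg])
    have hrestrict : (Measure.map q (μ (𝒢.src g))).restrict S = Measure.map q (μ (𝒢.src g)) :=
      Measure.restrict_eq_self_of_ae_mem (by
        rw [MeasureTheory.ae_iff]
        exact hρS)
    have hcontOn : ContinuousOn (fun k' => f (ℋ.mul k k')) S := by
      have hmulOn : ContinuousOn (fun k' => ℋ.mul k k') S := by
        have hmap : Set.MapsTo (fun k' => ((k, k') : H × H)) S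
            {p : H × H | ℋ.src p.1 = ℋ.tgt p.2} := by
          intro k' hk'
          simp only [hSdef, Set.mem_setOf_eq] at hk' ⊢
          exact hk'.symm
        exact ℋ.continuous_mul.comp
          ((continuous_const.prodMk continuous_id).continuousOn) hmap
      exact hf.comp_continuousOn hmulOn
    have hmeasRHS : AEStronglyMeasurable (fun k' => f (ℋ.mul k k'))
        (Measure.map q (μ (𝒢.src g))) := by
      have := hcontOn.aestronglyMeasurable hS.measurableSet
        (μ := Measure.map q (μ (𝒢.src g)))
      rwa [hrestrict] at this
    rw [integral_map hqm.aemeasurable hf.aestronglyMeasurable,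
      integral_map hqm.aemeasurable hmeasRHS]
    rw [hμ.left_invariant g _ hfqcont hfqc]
    apply integral_congr_ae
    have hae : ∀ᵐ h' ∂ μ (𝒢.src g), 𝒢.tgt h' = 𝒢.src g := by
      rw [MeasureTheory.ae_iff]
      simpa using hμ.supported _ (𝒢.src_mem_units g)
    filter_upwards [hae] with h' hh'
    rw [hqmul g h' hh'.symm, hqg]
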